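/- Let X̄ be a metric space, ∂X ⊆ X̄, and V¹, …, Vⁿ subsets of ∂X. Suppose ε : ∂X → (0,1] is a function such that for every x ∈ ∂X and every i with x ∈ Vⁱ, one has B(x, ε(x)) ∩ ∂X ⊆ ∩{Vʲ : x ∈ Vʲ} (the intersection of all the sets among V¹,…,Vⁿ containing x). Define U(Y) = ∪_{x∈Y} B(x, ε(x)/2) for Y ⊆ ∂X. Then ∩_{i=1}^n U(Vⁱ) = U(∩_{i=1}^n Vⁱ). -/
import Mathlib


/-- Extension lemma: given subsets `V¹, …, Vⁿ` of `∂X ⊆ X̄` and `ε : ∂X → (0,1]` such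
that for every `x ∈ ∂X` lying in some `Vⁱ`, the ball `B(x, ε x) ∩ ∂X` is contained in
the intersection of all the `Vʲ` containing `x`, the sets `U(Y) = ⋃_{x ∈ Y} B(x, ε x / 2)`
satisfy `⋂ᵢ U(Vⁱ) = U(⋂ᵢ Vⁱ)`. -/
theorem stmt4 {X : Type*} [MetricSpace X] (boundary : Set X) (n : ℕ) (hn : 0 < n)
    (V : Fin n → Set X) (hV : ∀ i, V i ⊆ boundary)
    (ε : X → ℝ) (hε0 : ∀ x ∈ boundary, 0 < ε x) (hε1 : ∀ x ∈ boundary, ε x ≤ 1)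
    (hcond : ∀ x ∈ boundary, ∀ i : Fin n, x ∈ V i →
      Metric.ball x (ε x) ∩ boundary ⊆ ⋂ j ∈ {j : Fin n | x ∈ V j}, V j) :
    (⋂ i : Fin n, ⋃ x ∈ V i, Metric.ball x (ε x / 2)) =
      ⋃ x ∈ ⋂ i : Fin n, V i, Metric.ball x (ε x / 2) := by
  apply Set.Subset.antisymm
  · intro y hy
    simp only [Set.mem_iInter, Set.mem_iUnion] at hy
    choose x hxV hxB using hy
    have : Nonempty (Fin n) := ⟨⟨0, hn⟩⟩
    obtain ⟨i, -, hi⟩ := Finset.exists_min_image (Finset.univ : Finset (Fin n))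
      (fun j => ε (x j)) ⟨Classical.arbitrary _, Finset.mem_univ _⟩
    have hxiV : ∀ j, x i ∈ V j := by
      intro j
      have hd : dist (x i) (x j) < ε (x j) := by
        calc dist (x i) (x j) ≤ dist (x i) y + dist y (x j) := dist_triangle _ _ _
          _ < ε (x i) / 2 + ε (x j) / 2 := by
              have h1 := hxB i
              have h2 := hxB j
              rw [Metric.mem_ball] at h1 h2
              rw [dist_comm (x i) y]
              linarith
          _ ≤ ε (x j) := by
              have := hi j (Finset.mem_univ j)
              linarith
      have hmem : x i ∈ Metric.ball (x j) (ε (x j)) ∩ boundary :=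
        ⟨Metric.mem_ball.2 hd, hV i (hxV i)⟩
      have := hcond (x j) (hV j (hxV j)) j (hxV j) hmem
      simp only [Set.mem_iInter, Set.mem_setOf_eq] at this
      exact this j (hxV j)
    refine Set.mem_iUnion.2 ⟨x i, Set.mem_iUnion.2 ⟨Set.mem_iInter.2 hxiV, hxB i⟩⟩
  · intro y hy
    simp only [Set.mem_iUnion, Set.mem_iInter] at hy ⊢
    obtain ⟨x, hx, hxb⟩ := hy
    exact fun i => ⟨x, hx i, hxb⟩
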